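/- Let α, Σ_n, Λ_n satisfy αΣ_n − Σ_nα* = iΛ_nΛ_n* with Σ_n positive definite and invertible. Then for every λ in the open lower half plane (Im λ < 0) and every λ not in the spectrum of α, W_{α,Λ}(n,λ)* W_{α,Λ}(n,λ) ≤ I_{2m} in the sense of Hermitian matrices, where W_{α,Λ}(n,λ) = I_{2m} + iΛ_n*Σ_n⁻¹(λI_N − α)⁻¹Λ_n. -/

import Mathlib

open Matrix
open scoped ComplexOrder

lemma psd_smul {n : ℕ} {M : Matrix (Fin n) (Fin n) ℂ} (hM : M.PosSemidef)
    (c : ℝ) (hc : 0 ≤ c) : ((c : ℂ) • M).PosSemidef := by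
  refine posSemidef_iff_dotProduct_mulVec.mpr ⟨?_, ?_⟩
  · unfold Matrix.IsHermitian
    rw [conjTranspose_smul, hM.1.eq]
    congr 1
    simp
  · intro x
    rw [smul_mulVec, dotProduct_smul]
    exact mul_nonneg (by exact_mod_cast Complex.zero_le_real.mpr hc) (hM.dotProduct_mulVec_nonneg x)

lemma key_alg {N m : ℕ} (α Sig P R B : Matrix (Fin N) (Fin N) ℂ)
    (Λ : Matrix (Fin N) (Fin m ⊕ Fin m) ℂ) (lam : ℂ)
    (hid : α * Sig - Sig * αᴴ = Complex.I • (Λ * Λᴴ))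
    (hPS : P * Sig = 1) (hSP : Sig * P = 1)
    (hBR : B * R = 1) (hRB : R * B = 1)
    (hPH : Pᴴ = P) (hRdef : R = lam • 1 - α) :
    1 - (1 + Complex.I • (Λᴴ * P * B * Λ))ᴴ * (1 + Complex.I • (Λᴴ * P * B * Λ))
      = (Complex.I * (lam - starRingEnd ℂ lam)) • ((B * Λ)ᴴ * P * (B * Λ)) := by
  have hα : α = lam • 1 - R := by rw [hRdef]; abel
  have hαh : αᴴ = (starRingEnd ℂ lam) • 1 - Rᴴ := by
    rw [hα]; simp [conjTranspose_smul]
  have hBH : Bᴴ * Rᴴ = 1 := by rw [← conjTranspose_mul, hRB, conjTranspose_one]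
  have hRH : Rᴴ * Bᴴ = 1 := by rw [← conjTranspose_mul, hBR, conjTranspose_one]
  have hLLX : ∀ (X : Matrix (Fin N) (Fin m ⊕ Fin m) ℂ),
      Λ * (Λᴴ * X) = (-Complex.I) • (α * (Sig * X) - Sig * (αᴴ * X)) := by
    intro X
    have : Λ * Λᴴ = (-Complex.I) • (α * Sig - Sig * αᴴ) := by
      rw [hid, smul_smul]
      norm_num [Complex.I_mul_I]
    rw [← Matrix.mul_assoc, this, Matrix.smul_mul, Matrix.sub_mul, Matrix.mul_assoc,
      Matrix.mul_assoc]
  have cSP : ∀ (X : Matrix (Fin N) (Fin m ⊕ Fin m) ℂ), Sig * (P * X) = X := fun X => by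
    rw [← Matrix.mul_assoc, hSP, Matrix.one_mul]
  have cPS : ∀ (X : Matrix (Fin N) (Fin m ⊕ Fin m) ℂ), P * (Sig * X) = X := fun X => by
    rw [← Matrix.mul_assoc, hPS, Matrix.one_mul]
  have cRB : ∀ (X : Matrix (Fin N) (Fin m ⊕ Fin m) ℂ), R * (B * X) = X := fun X => by
    rw [← Matrix.mul_assoc, hRB, Matrix.one_mul]
  have cBR : ∀ (X : Matrix (Fin N) (Fin m ⊕ Fin m) ℂ), B * (R * X) = X := fun X => by
    rw [← Matrix.mul_assoc, hBR, Matrix.one_mul]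
  have cBH : ∀ (X : Matrix (Fin N) (Fin m ⊕ Fin m) ℂ), Bᴴ * (Rᴴ * X) = X := fun X => by
    rw [← Matrix.mul_assoc, hBH, Matrix.one_mul]
  have cRH : ∀ (X : Matrix (Fin N) (Fin m ⊕ Fin m) ℂ), Rᴴ * (Bᴴ * X) = X := fun X => by
    rw [← Matrix.mul_assoc, hRH, Matrix.one_mul]
  simp only [conjTranspose_add, conjTranspose_one, conjTranspose_smul, conjTranspose_mul,
    conjTranspose_conjTranspose, hPH, Complex.star_def, Complex.conj_I]
  simp only [Matrix.add_mul, Matrix.mul_add, Matrix.smul_mul, Matrix.mul_smul,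
    Matrix.mul_assoc, Matrix.one_mul, Matrix.mul_one, smul_smul]
  rw [hLLX]
  simp only [hα, hαh, conjTranspose_sub, conjTranspose_smul, conjTranspose_one,
    Complex.star_def, Matrix.sub_mul, Matrix.mul_sub, Matrix.smul_mul, Matrix.mul_smul,
    Matrix.one_mul, smul_sub, smul_smul, cSP, cPS, cRB, cBR, cBH, cRH]
  match_scalars <;> (try ring1) <;>
    first
      | linear_combination Complex.I_sq * Complex.I
      | linear_combination (-Complex.I) * Complex.I_sq
      | linear_combination Complex.I * ((starRingEnd ℂ) lam - lam) * Complex.I_sq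

theorem stmt4 {N m : ℕ}
    (α : Matrix (Fin N) (Fin N) ℂ)
    (Sig : Matrix (Fin N) (Fin N) ℂ)
    (Λ : Matrix (Fin N) (Fin m ⊕ Fin m) ℂ)
    (hid : α * Sig - Sig * αᴴ = Complex.I • (Λ * Λᴴ))
    (hSigpos : Sig.PosDef) (hSiginv : IsUnit Sig)
    (lam : ℂ) (him : lam.im < 0)
    (hl : IsUnit (lam • (1 : Matrix (Fin N) (Fin N) ℂ) - α)) :
    (1 -
      (1 + Complex.I • (Λᴴ * Sig⁻¹ * (lam • (1 : Matrix (Fin N) (Fin N) ℂ) - α)⁻¹ * Λ))ᴴ *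
      (1 + Complex.I • (Λᴴ * Sig⁻¹ * (lam • (1 : Matrix (Fin N) (Fin N) ℂ) - α)⁻¹ * Λ))).PosSemidef := by
  set R : Matrix (Fin N) (Fin N) ℂ := lam • (1 : Matrix (Fin N) (Fin N) ℂ) - α with hRdef
  have hRd : IsUnit R.det := (Matrix.isUnit_iff_isUnit_det R).mp hl
  have hSd : IsUnit Sig.det := (Matrix.isUnit_iff_isUnit_det Sig).mp hSiginv
  have hPS : Sig⁻¹ * Sig = 1 := Matrix.nonsing_inv_mul Sig hSd
  have hSP : Sig * Sig⁻¹ = 1 := Matrix.mul_nonsing_inv Sig hSd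
  have hBR : R⁻¹ * R = 1 := Matrix.nonsing_inv_mul R hRd
  have hRB : R * R⁻¹ = 1 := Matrix.mul_nonsing_inv R hRd
  have hPH : (Sig⁻¹)ᴴ = Sig⁻¹ := hSigpos.posSemidef.inv.1
  have key := key_alg α Sig Sig⁻¹ R R⁻¹ Λ lam hid hPS hSP hBR hRB hPH hRdef
  rw [key]
  have hc : Complex.I * (lam - starRingEnd ℂ lam) = ((-2 * lam.im : ℝ) : ℂ) := by
    rw [Complex.sub_conj]
    push_cast
    simp [Complex.ext_iff]
  rw [hc]
  have : (((-2 * lam.im : ℝ) : ℂ)) • ((R⁻¹ * Λ)ᴴ * Sig⁻¹ * (R⁻¹ * Λ))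
      = (R⁻¹ * Λ)ᴴ * (((-2 * lam.im : ℝ) : ℂ) • Sig⁻¹) * (R⁻¹ * Λ) := by
    rw [Matrix.mul_smul, Matrix.smul_mul]
  rw [this]
  exact (psd_smul hSigpos.posSemidef.inv (-2 * lam.im) (by nlinarith)).conjTranspose_mul_mul_same _
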